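/- arXiv:0708.2574 — 2 statements merged into one kernel-verified Lean document; each statement's English description precedes it below -/
import Mathlib

section
/- The q-Catalan number admits the product representation C_n(q) = Π_{i=1}^{n-1} (1 + q + ... + q^{n+i}) / Π_{i=1}^{n-1} (1 + q + ... + q^i), i.e., C_n(q) = Π_{i=1}^{n-1} [n+i+1]_q / [i+1]_q. -/
open Polynomial Finset

noncomputable def qInt (m : ℕ) : Polynomial ℝ :=
  ∑ i ∈ Finset.range m, Polynomial.X ^ i

noncomputable def qFact (m : ℕ) : Polynomial ℝ :=
  ∏ i ∈ Finset.range m, qInt (i + 1)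

lemma qInt_ne_zero {m : ℕ} (hm : 1 ≤ m) : qInt m ≠ 0 := by
  intro h
  have h1 := congrArg (Polynomial.eval 1) h
  simp [qInt, Polynomial.eval_finset_sum] at h1
  omega

lemma qFact_ne_zero (m : ℕ) : qFact m ≠ 0 := by
  unfold qFact
  exact Finset.prod_ne_zero_iff.mpr fun i _ => qInt_ne_zero (Nat.le_add_left 1 i)

lemma qInt_one : qInt 1 = 1 := by simp [qInt]

/-- The q-Catalan number admits the product representation
$C_n(q) = ∏_{i=1}^{n-1} [n+i+1]_q / [i+1]_q$. -/
theorem qCatalan_product_formula (n : ℕ) (hn : 1 ≤ n) (P : Polynomial ℝ)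
    (hP : qFact n ^ 2 * qInt (n + 1) * P = qFact (2 * n)) :
    P * ∏ i ∈ Finset.Icc 1 (n - 1), qInt (i + 1)
      = ∏ i ∈ Finset.Icc 1 (n - 1), qInt (n + i + 1) := by
  obtain ⟨k, rfl⟩ : ∃ k, n = k + 1 := ⟨n - 1, (Nat.succ_pred_eq_of_pos hn).symm⟩
  have hA : ∏ i ∈ Finset.Icc 1 (k + 1 - 1), qInt (i + 1) = qFact (k + 1) := by
    rw [show Finset.Icc 1 (k + 1 - 1) = Finset.Ico 1 (k+1) by rw [Finset.Ico_add_one_right_eq_Icc]; rfl, Finset.prod_Ico_eq_prod_range]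
    unfold qFact
    rw [Finset.prod_range_succ']
    simp [qInt_one, add_comm]
  have hB : qFact (2 * (k + 1)) =
      qFact (k + 1) * qInt (k + 1 + 1) *
        ∏ i ∈ Finset.Icc 1 (k + 1 - 1), qInt (k + 1 + i + 1) := by
    rw [show Finset.Icc 1 (k + 1 - 1) = Finset.Ico 1 (k+1) by rw [Finset.Ico_add_one_right_eq_Icc]; rfl,
      Finset.prod_Ico_eq_prod_range]
    unfold qFact
    rw [two_mul, Finset.prod_range_add,
      Finset.prod_range_succ' (fun x => qInt (k + 1 + x + 1)) k]
    have h2 : ∏ i ∈ Finset.range (k + 1 - 1), qInt (k + 1 + (1 + i) + 1)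
        = ∏ i ∈ Finset.range k, qInt (k + 1 + (i + 1) + 1) := by
      apply Finset.prod_congr (by simp)
      intro i _; congr 1; omega
    rw [h2]; ring
  rw [hA]
  have hne : qFact (k + 1) * qInt (k + 1 + 1) ≠ 0 :=
    mul_ne_zero (qFact_ne_zero _) (qInt_ne_zero (by omega))
  apply mul_left_cancel₀ hne
  rw [show qFact (k + 1) * qInt (k + 1 + 1) * (P * qFact (k + 1)) =
      qFact (k + 1) ^ 2 * qInt (k + 1 + 1) * P by ring, hP, hB]
end

section
/- The moment generating function of ξ_n satisfies M_n(q) = exp(n(n-1)q/2) · Π_{i=2}^{n} [sinh((n+i)q/2)/((n+i)/2)] / [sinh(iq/2)/(i/2)], where M_n(q) = C_n(e^q)/C_n. -/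
open Polynomial Finset

lemma qInt_eval (m : ℕ) (x : ℝ) : (qInt m).eval x = ∑ i ∈ Finset.range m, x ^ i := by
  simp [qInt]

lemma qInt_eval_one (m : ℕ) : (qInt m).eval 1 = m := by simp [qInt_eval]

lemma qFact_eval (m : ℕ) (x : ℝ) :
    (qFact m).eval x = ∏ i ∈ Finset.range m, (qInt (i+1)).eval x := by
  simp [qFact, eval_prod]

lemma exp_sub_one (y : ℝ) : Real.exp y - 1 = 2 * Real.exp (y/2) * Real.sinh (y/2) := by
  rw [Real.sinh_eq, Real.exp_neg]
  have h : Real.exp (y/2) ≠ 0 := Real.exp_ne_zero _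
  have h2 : Real.exp (y/2) * Real.exp (y/2) = Real.exp y := by
    rw [← Real.exp_add]; ring_nf
  field_simp
  linear_combination (-1) * h2

lemma sinh_ne_zero' {x : ℝ} (hx : x ≠ 0) : Real.sinh x ≠ 0 := by
  intro h; rw [Real.sinh_eq_zero] at h; exact hx h

lemma qInt_eval_exp (m : ℕ) (q : ℝ) (hq : q ≠ 0) :
    (qInt m).eval (Real.exp q)
      = Real.exp (((m:ℝ) - 1) * q / 2) * Real.sinh ((m:ℝ) * q / 2) / Real.sinh (q/2) := by
  have hs : Real.sinh (q/2) ≠ 0 := sinh_ne_zero' (by intro h; exact hq (by linarith))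
  have hg := geom_sum_mul (Real.exp q) m
  have hpow : Real.exp q ^ m = Real.exp ((m:ℝ) * q) := by rw [← Real.exp_nat_mul]
  rw [qInt_eval, eq_div_iff hs]
  rw [hpow, exp_sub_one ((m:ℝ)*q), exp_sub_one q] at hg
  have he : Real.exp (((m:ℝ) - 1) * q / 2) * Real.exp (q/2) = Real.exp ((m:ℝ)*q/2) := by
    rw [← Real.exp_add]; ring_nf
  have goal2 : (2*Real.exp (q/2)) * ((∑ i ∈ Finset.range m, Real.exp q ^ i) * Real.sinh (q/2))
      = (2*Real.exp (q/2)) * (Real.exp (((m:ℝ)-1)*q/2) * Real.sinh ((m:ℝ)*q/2)) := by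
    linear_combination hg - 2*Real.sinh ((m:ℝ)*q/2) * he
  exact mul_left_cancel₀ (by positivity) goal2

lemma key_prod (n : ℕ) (hn : 2 ≤ n) (f : ℕ → ℝ) (hf1 : f 1 = 1) :
    (∏ i ∈ Finset.range (2*n), f (i+1)) * ∏ i ∈ Finset.Icc 2 n, f i
      = (∏ i ∈ Finset.range n, f (i+1))^2 * f (n+1) * ∏ i ∈ Finset.Icc 2 n, f (n+i) := by
  obtain ⟨k, rfl⟩ : ∃ k, n = k + 2 := ⟨n - 2, by omega⟩
  have hIcc : ∀ g : ℕ → ℝ, ∏ i ∈ Finset.Icc 2 (k+2), g i = ∏ i ∈ Finset.range (k+1), g (2+i) := by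
    intro g
    rw [← Finset.Ico_add_one_right_eq_Icc, Finset.prod_Ico_eq_prod_range]
    have hk : k+2+1-2 = k+1 := by omega
    rw [hk]
  have h2n : 2*(k+2) = (k+2) + (k+2) := by ring
  rw [h2n, Finset.prod_range_add, hIcc, hIcc]
  have hA : ∏ i ∈ Finset.range (k+2), f (i+1)
      = (∏ i ∈ Finset.range (k+1), f (2+i)) := by
    rw [Finset.prod_range_succ' (fun i => f (i+1)) (k+1), hf1, mul_one]
    exact Finset.prod_congr rfl (fun i _ => by ring_nf)
  have hB : ∏ i ∈ Finset.range (k+2), f ((k+2) + i + 1)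
      = f ((k+2)+1) * ∏ i ∈ Finset.range (k+1), f ((k+2) + (2+i)) := by
    rw [Finset.prod_range_succ' (fun i => f ((k+2)+i+1)) (k+1)]
    rw [mul_comm]
    congr 1
    exact Finset.prod_congr rfl (fun i _ => by congr 1; omega)
  rw [hB, hA]
  ring

lemma cancel_step (n : ℕ) (hn : 2 ≤ n) (f : ℕ → ℝ) (hf1 : f 1 = 1)
    (hfne : ∀ m, 1 ≤ m → f m ≠ 0) (Pe : ℝ)
    (hPe : (∏ i ∈ Finset.range n, f (i+1))^2 * f (n+1) * Pe
            = ∏ i ∈ Finset.range (2*n), f (i+1)) :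
    Pe = (∏ i ∈ Finset.Icc 2 n, f (n+i)) / ∏ i ∈ Finset.Icc 2 n, f i := by
  have hA : (∏ i ∈ Finset.range n, f (i+1)) ≠ 0 :=
    Finset.prod_ne_zero_iff.mpr (fun i _ => hfne _ (by omega))
  have hB : (∏ i ∈ Finset.Icc 2 n, f i) ≠ 0 :=
    Finset.prod_ne_zero_iff.mpr (fun i hi => hfne _ (by
      have := (Finset.mem_Icc.mp hi).1; omega))
  have hk := key_prod n hn f hf1
  rw [eq_div_iff hB]
  apply mul_left_cancel₀
    (mul_ne_zero (pow_ne_zero 2 hA) (hfne (n+1) (by omega)))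
  calc (∏ i ∈ Finset.range n, f (i+1))^2 * f (n+1) * (Pe * ∏ i ∈ Finset.Icc 2 n, f i)
      = ((∏ i ∈ Finset.range n, f (i+1))^2 * f (n+1) * Pe) * ∏ i ∈ Finset.Icc 2 n, f i := by
        ring
    _ = (∏ i ∈ Finset.range (2*n), f (i+1)) * ∏ i ∈ Finset.Icc 2 n, f i := by rw [hPe]
    _ = (∏ i ∈ Finset.range n, f (i+1))^2 * f (n+1) * ∏ i ∈ Finset.Icc 2 n, f (n+i) := hk

/-- The moment generating function of $ξ_n$ satisfies
$M_n(q) = e^{n(n-1)q/2} ∏_{i=2}^n \frac{\sinh((n+i)q/2)/((n+i)/2)}{\sinh(iq/2)/(i/2)}$. -/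
theorem qCatalan_mgf_product (n : ℕ) (hn : 2 ≤ n) (P : Polynomial ℝ)
    (hP : qFact n ^ 2 * qInt (n + 1) * P = qFact (2 * n)) (q : ℝ) (hq : q ≠ 0) :
    P.eval (Real.exp q) / P.eval 1
      = Real.exp ((n : ℝ) * ((n : ℝ) - 1) * q / 2) *
        ∏ i ∈ Finset.Icc 2 n,
          (Real.sinh (((n : ℝ) + (i : ℝ)) * q / 2) / (((n : ℝ) + (i : ℝ)) / 2)) /
            (Real.sinh ((i : ℝ) * q / 2) / ((i : ℝ) / 2)) := by
  have hs : Real.sinh (q/2) ≠ 0 := sinh_ne_zero' (by intro h; exact hq (by linarith))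
  set x := Real.exp q with hxdef
  -- f : evaluations at x
  set f : ℕ → ℝ := fun m => (qInt m).eval x with hfdef
  have hf1 : f 1 = 1 := by simp [hfdef, qInt_eval]
  have hfval : ∀ m : ℕ, f m
      = Real.exp (((m:ℝ) - 1) * q / 2) * Real.sinh ((m:ℝ) * q / 2) / Real.sinh (q/2) :=
    fun m => qInt_eval_exp m q hq
  have hfne : ∀ m : ℕ, 1 ≤ m → f m ≠ 0 := by
    intro m hm
    rw [hfval]
    have hm' : (m:ℝ) ≠ 0 := Nat.cast_ne_zero.mpr (by omega)
    exact div_ne_zero (mul_ne_zero (Real.exp_ne_zero _)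
      (sinh_ne_zero' (div_ne_zero (mul_ne_zero hm' hq) two_ne_zero))) hs
  -- g : evaluations at 1
  set g : ℕ → ℝ := fun m => (m:ℝ) with hgdef
  have hg1 : g 1 = 1 := by simp [hgdef]
  have hgne : ∀ m : ℕ, 1 ≤ m → g m ≠ 0 := by
    intro m hm; exact Nat.cast_ne_zero.mpr (by omega)
  -- evaluate hP at x
  have hPx := congrArg (Polynomial.eval x) hP
  have hP1 := congrArg (Polynomial.eval 1) hP
  simp only [eval_mul, eval_pow, qFact_eval] at hPx hP1
  have hPx' : (∏ i ∈ Finset.range n, f (i+1))^2 * f (n+1) * P.eval x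
      = ∏ i ∈ Finset.range (2*n), f (i+1) := hPx
  have hP1' : (∏ i ∈ Finset.range n, g (i+1))^2 * g (n+1) * P.eval 1
      = ∏ i ∈ Finset.range (2*n), g (i+1) := by
    have : ∀ m : ℕ, (qInt m).eval 1 = g m := fun m => qInt_eval_one m
    simpa only [this] using hP1
  have hx := cancel_step n hn f hf1 hfne _ hPx'
  have h1 := cancel_step n hn g hg1 hgne _ hP1'
  rw [hx, h1]
  -- nonzeroness of the four products
  have hBf : (∏ i ∈ Finset.Icc 2 n, f i) ≠ 0 :=
    Finset.prod_ne_zero_iff.mpr (fun i hi => hfne _ (by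
      have := (Finset.mem_Icc.mp hi).1; omega))
  have hBg : (∏ i ∈ Finset.Icc 2 n, g i) ≠ 0 :=
    Finset.prod_ne_zero_iff.mpr (fun i hi => hgne _ (by
      have := (Finset.mem_Icc.mp hi).1; omega))
  -- rewrite LHS as a single product
  rw [← Finset.prod_div_distrib, ← Finset.prod_div_distrib, ← Finset.prod_div_distrib]
  -- rewrite the exp factor as a product
  have hcard : (Finset.Icc 2 n).card = n - 1 := by
    rw [Nat.card_Icc]; omega
  have hexp : Real.exp ((n : ℝ) * ((n : ℝ) - 1) * q / 2)
      = ∏ _i ∈ Finset.Icc 2 n, Real.exp ((n:ℝ) * q / 2) := by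
    rw [Finset.prod_const, hcard, ← Real.exp_nat_mul]
    congr 1
    have : ((n - 1 : ℕ) : ℝ) = (n:ℝ) - 1 := by
      have : 1 ≤ n := by omega
      push_cast [this]; ring
    rw [this]; ring
  rw [hexp, ← Finset.prod_mul_distrib]
  apply Finset.prod_congr rfl
  intro i hi
  obtain ⟨hi2, hin⟩ := Finset.mem_Icc.mp hi
  have hiR : (i:ℝ) ≠ 0 := Nat.cast_ne_zero.mpr (by omega)
  have hniR : (n:ℝ) + (i:ℝ) ≠ 0 := by positivity
  have hsi : Real.sinh ((i:ℝ) * q / 2) ≠ 0 :=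
    sinh_ne_zero' (div_ne_zero (mul_ne_zero hiR hq) two_ne_zero)
  rw [hfval, hfval]
  simp only [hgdef]
  push_cast
  have hee : Real.exp (((n:ℝ) + (i:ℝ) - 1) * q / 2)
      = Real.exp ((n:ℝ) * q / 2) * Real.exp (((i:ℝ) - 1) * q / 2) := by
    rw [← Real.exp_add]; ring_nf
  rw [hee]
  have he1 : Real.exp (((i:ℝ) - 1) * q / 2) ≠ 0 := Real.exp_ne_zero _
  field_simp
end
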